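/- Let M = (L(E), ρ) be a q-polymatroid on E = F_q^n and define ρ*(V) = dim(V) + ρ(V^⊥) - ρ(E) for all subspaces V of E. Then ρ* is again a q-rank function (bounded, monotone, submodular), and the rank of the dual q-polymatroid satisfies ρ*(E) = n - ρ(E). Moreover (ρ*)* = ρ. -/

import Mathlib

open Matrix

variable {F : Type*} [Field F]

/-- Column space of a matrix: the span of its columns. -/
def colSpace {n m : ℕ} (M : Matrix (Fin n) (Fin m) F) : Submodule F (Fin n → F) :=
  Submodule.span F (Set.range Mᵀ)

lemma colSpace_le_iff {n m : ℕ} (M : Matrix (Fin n) (Fin m) F) (U : Submodule F (Fin n → F)) :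
    colSpace M ≤ U ↔ ∀ j, Mᵀ j ∈ U := by
  rw [colSpace, Submodule.span_le]
  constructor
  · intro h j
    exact h (Set.mem_range_self j)
  · rintro h _ ⟨j, rfl⟩
    exact h j

/-- `C(U)`: the codewords of `C` whose column space is contained in `U`. -/
def codeCU {n m : ℕ} (C : Submodule F (Matrix (Fin n) (Fin m) F))
    (U : Submodule F (Fin n → F)) : Submodule F (Matrix (Fin n) (Fin m) F) where
  carrier := {M | M ∈ C ∧ colSpace M ≤ U}
  add_mem' := by
    rintro a b ⟨haC, ha⟩ ⟨hbC, hb⟩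
    refine ⟨C.add_mem haC hbC, (colSpace_le_iff _ _).2 fun j => ?_⟩
    have h := U.add_mem ((colSpace_le_iff a U).1 ha j) ((colSpace_le_iff b U).1 hb j)
    rw [Matrix.transpose_add]
    exact h
  zero_mem' := by
    exact ⟨C.zero_mem, (colSpace_le_iff _ _).2 fun j => U.zero_mem⟩
  smul_mem' := by
    rintro c a ⟨haC, ha⟩
    refine ⟨C.smul_mem c haC, (colSpace_le_iff _ _).2 fun j => ?_⟩
    have h := U.smul_mem c ((colSpace_le_iff a U).1 ha j)
    rw [Matrix.transpose_smul]
    exact h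

/-- Orthogonal complement with respect to the standard (dot-product) bilinear form. -/
def perp {n : ℕ} (U : Submodule F (Fin n → F)) : Submodule F (Fin n → F) where
  carrier := {v | ∀ u ∈ U, v ⬝ᵥ u = 0}
  add_mem' := by
    intro a b ha hb u hu
    rw [add_dotProduct, ha u hu, hb u hu, add_zero]
  zero_mem' := by
    intro u hu
    rw [zero_dotProduct]
  smul_mem' := by
    intro c a ha u hu
    rw [smul_dotProduct, ha u hu, smul_zero]

/-- The minimum rank distance of a matrix code. -/
noncomputable def minRankDist {n m : ℕ} (C : Submodule F (Matrix (Fin n) (Fin m) F)) : ℕ :=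
  sInf {r : ℕ | ∃ M ∈ C, M ≠ 0 ∧ M.rank = r}

/-- The rank function of the q-polymatroid associated to a matrix rank-metric code. -/
noncomputable def rhoCode {n m : ℕ} (C : Submodule F (Matrix (Fin n) (Fin m) F))
    (U : Submodule F (Fin n → F)) : ℚ :=
  ((Module.finrank F C : ℚ) - (Module.finrank F (codeCU C (perp U)) : ℚ)) / (m : ℚ)

section PerpFacts

open Module

variable {n : ℕ}

/-- The dot product as a linear map into the dual. -/
noncomputable def dotPhi (F : Type*) [Field F] (n : ℕ) :
    (Fin n → F) →ₗ[F] Module.Dual F (Fin n → F) :=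
  LinearMap.mk₂ F (fun v u => v ⬝ᵥ u)
    (fun _ _ _ => add_dotProduct _ _ _)
    (fun _ _ _ => smul_dotProduct _ _ _)
    (fun _ _ _ => dotProduct_add _ _ _)
    (fun _ _ _ => dotProduct_smul _ _ _)

lemma dotPhi_injective : Function.Injective (dotPhi F n) := by
  rw [← LinearMap.ker_eq_bot, eq_bot_iff]
  intro v hv
  have h : ∀ u, v ⬝ᵥ u = 0 := fun u =>
    congrFun (congrArg DFunLike.coe (LinearMap.mem_ker.1 hv)) u
  have : v = 0 := by
    funext i
    have := h (Pi.single i 1)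
    rwa [dotProduct_single, mul_one] at this
  simp [this]

/-- The dot product as a linear equivalence onto the dual. -/
noncomputable def dotEquiv (F : Type*) [Field F] (n : ℕ) :
    (Fin n → F) ≃ₗ[F] Module.Dual F (Fin n → F) :=
  (dotPhi F n).linearEquivOfInjective dotPhi_injective
    (Subspace.dual_finrank_eq (K := F) (V := Fin n → F)).symm

lemma perp_eq_comap (U : Submodule F (Fin n → F)) :
    perp U = U.dualAnnihilator.comap (dotEquiv F n : (Fin n → F) →ₗ[F] _) := by
  ext v
  simp only [Submodule.mem_comap, Submodule.mem_dualAnnihilator]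
  have hd : ∀ u, (dotEquiv F n v) u = v ⬝ᵥ u := fun u => by
    rw [show ((dotEquiv F n) v : Module.Dual F (Fin n → F)) = dotPhi F n v from
      (dotPhi F n).linearEquivOfInjective_apply _ _ v]
    rfl
  simp only [LinearEquiv.coe_coe]
  constructor
  · intro hv u hu; rw [hd]; exact hv u hu
  · intro hv u hu; rw [← hd]; exact hv u hu

lemma finrank_perp_add (U : Submodule F (Fin n → F)) :
    finrank F (perp U) + finrank F U = n := by
  have h1 : finrank F (perp U) = finrank F U.dualAnnihilator := by
    rw [perp_eq_comap, Submodule.comap_equiv_eq_map_symm]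
    exact (dotEquiv F n).symm.finrank_map_eq _
  have h2 : finrank F U.dualAnnihilator = finrank F ((Fin n → F) ⧸ U) :=
    ((Subspace.quotEquivAnnihilator U).finrank_eq).symm
  have h3 : finrank F ((Fin n → F) ⧸ U) + finrank F U = finrank F (Fin n → F) :=
    U.finrank_quotient_add_finrank
  rw [h1, h2, h3, Module.finrank_fin_fun]

lemma finrank_perp (U : Submodule F (Fin n → F)) :
    finrank F (perp U) = n - finrank F U := by
  have := finrank_perp_add U
  omega

lemma finrank_perp_real (U : Submodule F (Fin n → F)) :
    (Module.finrank F (perp U) : ℝ) = (n : ℝ) - (Module.finrank F U : ℝ) := by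
  have h := finrank_perp_add U
  have h' : ((Module.finrank F (perp U) + Module.finrank F U : ℕ) : ℝ) = (n : ℝ) := by
    rw [h]
  push_cast at h'
  linarith

lemma le_perp_perp (U : Submodule F (Fin n → F)) : U ≤ perp (perp U) := by
  intro u hu v hv
  rw [dotProduct_comm]
  exact hv u hu

lemma perp_perp (U : Submodule F (Fin n → F)) : perp (perp U) = U := by
  have h1 := finrank_perp_add U
  have h2 := finrank_perp_add (perp U)
  exact (Submodule.eq_of_le_of_finrank_le (le_perp_perp U) (by omega)).symm

lemma perp_anti {A B : Submodule F (Fin n → F)} (h : A ≤ B) : perp B ≤ perp A :=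
  fun _ hv u hu => hv u (h hu)

lemma perp_sup (A B : Submodule F (Fin n → F)) :
    perp (A ⊔ B) = perp A ⊓ perp B := by
  apply le_antisymm
  · exact le_inf (perp_anti le_sup_left) (perp_anti le_sup_right)
  · rintro v ⟨hvA, hvB⟩ u hu
    obtain ⟨a, ha, b, hb, rfl⟩ := Submodule.mem_sup.1 hu
    rw [dotProduct_add, hvA a ha, hvB b hb, add_zero]

lemma perp_inf (A B : Submodule F (Fin n → F)) :
    perp (A ⊓ B) = perp A ⊔ perp B := by
  conv_lhs => rw [← perp_perp A, ← perp_perp B, ← perp_sup, perp_perp]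

lemma perp_top : perp (⊤ : Submodule F (Fin n → F)) = ⊥ := by
  rw [← Submodule.finrank_eq_zero (S := perp (⊤ : Submodule F (Fin n → F))),
    finrank_perp, finrank_top, Module.finrank_fin_fun]
  omega

end PerpFacts

/-- Key growth lemma: for `Y ≤ X`, `ρ X ≤ ρ Y + (dim X - dim Y)`. -/
lemma rho_growth {n : ℕ} (ρ : Submodule F (Fin n → F) → ℝ)
    (hR1 : ∀ A : Submodule F (Fin n → F), 0 ≤ ρ A ∧ ρ A ≤ (Module.finrank F A : ℝ))
    (hR3 : ∀ A B : Submodule F (Fin n → F), ρ (A ⊓ B) + ρ (A ⊔ B) ≤ ρ A + ρ B)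
    {Y X : Submodule F (Fin n → F)} (h : Y ≤ X) :
    ρ X ≤ ρ Y + ((Module.finrank F X : ℝ) - (Module.finrank F Y : ℝ)) := by
  obtain ⟨W, hW⟩ := Submodule.exists_isCompl Y
  set Z := W ⊓ X with hZ
  have hsup : Y ⊔ Z = X := by
    rw [hZ, ← sup_inf_assoc_of_le W h, hW.sup_eq_top, top_inf_eq]
  have hinf : Y ⊓ Z = ⊥ := by
    rw [hZ, ← inf_assoc, hW.inf_eq_bot, bot_inf_eq]
  have hfin : Module.finrank F X + Module.finrank F (⊥ : Submodule F (Fin n → F)) =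
      Module.finrank F Y + Module.finrank F Z := by
    rw [← hsup, ← hinf]; exact Submodule.finrank_sup_add_finrank_inf_eq Y Z
  rw [finrank_bot] at hfin
  have hZdim : (Module.finrank F Z : ℝ) =
      (Module.finrank F X : ℝ) - (Module.finrank F Y : ℝ) := by
    have : Module.finrank F X = Module.finrank F Y + Module.finrank F Z := by omega
    rw [this]; push_cast; ring
  have h3 := hR3 Y Z
  rw [hinf, hsup] at h3
  have hbot : ρ (⊥ : Submodule F (Fin n → F)) = 0 := by
    have h0 := hR1 (⊥ : Submodule F (Fin n → F))
    rw [finrank_bot] at h0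
    push_cast at h0
    linarith [h0.1, h0.2]
  have hZub := (hR1 Z).2
  linarith

/-- the dual rank function `ρ*(V) = dim V + ρ(V^⊥) - ρ(E)` is again a
q-rank function, `ρ*(E) = n - ρ(E)`, and `(ρ*)* = ρ`. -/
theorem dual_qrank_function [Fintype F] {n : ℕ}
    (ρ : Submodule F (Fin n → F) → ℝ)
    (hR1 : ∀ A : Submodule F (Fin n → F), 0 ≤ ρ A ∧ ρ A ≤ (Module.finrank F A : ℝ))
    (hR2 : ∀ A B : Submodule F (Fin n → F), A ≤ B → ρ A ≤ ρ B)
    (hR3 : ∀ A B : Submodule F (Fin n → F), ρ (A ⊓ B) + ρ (A ⊔ B) ≤ ρ A + ρ B) :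
    let ρd : Submodule F (Fin n → F) → ℝ :=
      fun V => (Module.finrank F V : ℝ) + ρ (perp V) - ρ ⊤
    (∀ A : Submodule F (Fin n → F), 0 ≤ ρd A ∧ ρd A ≤ (Module.finrank F A : ℝ)) ∧
    (∀ A B : Submodule F (Fin n → F), A ≤ B → ρd A ≤ ρd B) ∧
    (∀ A B : Submodule F (Fin n → F), ρd (A ⊓ B) + ρd (A ⊔ B) ≤ ρd A + ρd B) ∧
    ρd ⊤ = (n : ℝ) - ρ ⊤ ∧
    (∀ V : Submodule F (Fin n → F),
      (Module.finrank F V : ℝ) + ρd (perp V) - ρd ⊤ = ρ V) := by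
  intro ρd
  have hfintop : Module.finrank F (⊤ : Submodule F (Fin n → F)) = n := by
    rw [finrank_top, Module.finrank_fin_fun]
  have hbot : ρ (⊥ : Submodule F (Fin n → F)) = 0 := by
    have h0 := hR1 (⊥ : Submodule F (Fin n → F))
    rw [finrank_bot] at h0
    push_cast at h0
    linarith [h0.1, h0.2]
  have hdimle : ∀ A : Submodule F (Fin n → F), Module.finrank F A ≤ n := fun A => by
    have := finrank_perp_add A; omega
  refine ⟨?_, ?_, ?_, ?_, ?_⟩
  · -- R1
    intro A
    constructor
    · -- 0 ≤ ρd A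
      have hgrow := rho_growth ρ hR1 hR3 (le_top (a := perp A))
      have hfp := finrank_perp_real A
      simp only [ρd]
      rw [hfintop] at hgrow
      linarith
    · -- ρd A ≤ dim A
      have := hR2 (perp A) ⊤ le_top
      simp only [ρd]
      linarith
  · -- R2
    intro A B hAB
    have hgrow := rho_growth ρ hR1 hR3 (perp_anti hAB)
    have hfA := finrank_perp_real A
    have hfB := finrank_perp_real B
    simp only [ρd]
    linarith
  · -- R3
    intro A B
    have hdim : Module.finrank F ↥(A ⊔ B) + Module.finrank F ↥(A ⊓ B) =
        Module.finrank F A + Module.finrank F B :=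
      Submodule.finrank_sup_add_finrank_inf_eq A B
    have h3 := hR3 (perp A) (perp B)
    rw [← perp_sup, ← perp_inf] at h3
    simp only [ρd]
    have hdim' : (Module.finrank F ↥(A ⊔ B) : ℝ) + (Module.finrank F ↥(A ⊓ B) : ℝ) =
        (Module.finrank F A : ℝ) + (Module.finrank F B : ℝ) := by exact_mod_cast hdim
    linarith
  · -- ρd ⊤ = n - ρ ⊤
    simp only [ρd]
    rw [perp_top, hfintop, hbot]
    ring
  · -- double dual
    intro V
    simp only [ρd]
    rw [perp_perp, perp_top, hbot, hfintop]
    have hfV := finrank_perp_real V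
    linarith
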